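/- For any probability measure μ, nonnegative measurable function φ with μ[φ²] < ∞, setting φ̃ = (√φ − μ[√φ])², the entropy satisfies H(φ|μ) ≤ H(φ̃|μ) + 2 μ[(√φ − μ[√φ])²] (Rothaus' inequality). -/

import Mathlib

open MeasureTheory Real


private lemma one_sub_inv_le_log {x : ℝ} (hx : 0 < x) : 1 - x⁻¹ ≤ Real.log x := by
  have h := Real.log_le_sub_one_of_pos (inv_pos.2 hx)
  rw [Real.log_inv] at h
  linarith

private noncomputable def rothH (t : ℝ) : ℝ :=
  (t^2 + 2/3*t + 1) * Real.log (t^2 + 2/3*t + 1) - (1 + 2/3*t) * Real.log (1 + 2/3*t)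
    + 2*t^2 + 2*t - 2*((1+t) * ((1+t) * Real.log (1+t)))

private noncomputable def rothH1 (t : ℝ) : ℝ :=
  (2*t + 2/3) * Real.log (t^2 + 2/3*t + 1) - 2/3 * Real.log (1 + 2/3*t)
    + 4*t - 4*(1+t) * Real.log (1+t)

private noncomputable def rothH2 (t : ℝ) : ℝ :=
  2 * Real.log (t^2 + 2/3*t + 1) + (2*t + 2/3)^2 * (t^2 + 2/3*t + 1)⁻¹
    - 4/9 * (1 + 2/3*t)⁻¹ - 4 * Real.log (1+t)

private lemma rothA_pos (t : ℝ) : 0 < t^2 + 2/3*t + 1 := by nlinarith [sq_nonneg (t + 1/3)]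

section derivs
variable {t : ℝ}

private lemma dA' : HasDerivAt (fun u : ℝ => u^2 + 2/3*u + 1) (2*t + 2/3) t := by
  have h := ((hasDerivAt_id t).pow 2).add (((hasDerivAt_id t).const_mul (2/3:ℝ)).add_const 1)
  convert h using 1 <;> first
    | rfl
    | (funext x; simp only [id_eq, Pi.add_apply, Pi.pow_apply]; ring)
    | (simp only [id_eq]; push_cast; ring)

private lemma dS' : HasDerivAt (fun u : ℝ => 1 + 2/3*u) (2/3 : ℝ) t := by
  simpa using ((hasDerivAt_id t).const_mul (2/3:ℝ)).const_add 1

private lemma dT' : HasDerivAt (fun u : ℝ => 1 + u) (1 : ℝ) t := by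
  simpa using (hasDerivAt_id t).const_add 1

private lemma dlogA' (ht : -1 < t) :
    HasDerivAt (fun u : ℝ => Real.log (u^2 + 2/3*u + 1)) ((t^2 + 2/3*t + 1)⁻¹ * (2*t + 2/3)) t := by
  have := (Real.hasDerivAt_log (rothA_pos t).ne').comp t dA'
  simpa [Function.comp_def] using this

private lemma dlogS' (ht : -1 < t) :
    HasDerivAt (fun u : ℝ => Real.log (1 + 2/3*u)) ((1 + 2/3*t)⁻¹ * (2/3)) t := by
  have hs : (0:ℝ) < 1 + 2/3*t := by linarith
  have := (Real.hasDerivAt_log hs.ne').comp t dS'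
  simpa [Function.comp_def] using this

private lemma dlogT' (ht : -1 < t) :
    HasDerivAt (fun u : ℝ => Real.log (1 + u)) ((1 + t)⁻¹) t := by
  have h1t : (0:ℝ) < 1 + t := by linarith
  have := (Real.hasDerivAt_log h1t.ne').comp t dT'
  simpa [Function.comp_def] using this

private lemma dTlogT (ht : -1 < t) :
    HasDerivAt (fun u : ℝ => (1+u) * Real.log (1+u)) (Real.log (1+t) + 1) t := by
  have h1t : (0:ℝ) < 1 + t := by linarith
  have := dT'.mul (dlogT' ht)
  rw [mul_inv_cancel₀ h1t.ne'] at this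
  simpa [Pi.mul_def] using this

private lemma hasDerivAt_rothH (ht : -1 < t) : HasDerivAt rothH (rothH1 t) t := by
  have hA := rothA_pos t
  have hs : (0:ℝ) < 1 + 2/3*t := by linarith
  have h1t : (0:ℝ) < 1 + t := by linarith
  have p1 : HasDerivAt (fun u : ℝ => (u^2 + 2/3*u + 1) * Real.log (u^2 + 2/3*u + 1))
      ((2*t + 2/3) * Real.log (t^2 + 2/3*t + 1) + (2*t + 2/3)) t := by
    have := dA'.mul (dlogA' ht)
    rwa [mul_inv_cancel_left₀ hA.ne'] at this
  have p2 : HasDerivAt (fun u : ℝ => (1 + 2/3*u) * Real.log (1 + 2/3*u))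
      (2/3 * Real.log (1 + 2/3*t) + 2/3) t := by
    have := dS'.mul (dlogS' ht)
    rwa [mul_inv_cancel_left₀ hs.ne'] at this
  have p3 : HasDerivAt (fun u : ℝ => (1+u) * ((1+u) * Real.log (1+u)))
      (1 * ((1+t) * Real.log (1+t)) + (1+t) * (Real.log (1+t) + 1)) t :=
    dT'.mul (dTlogT ht)
  have dpoly : HasDerivAt (fun u : ℝ => 2*u^2 + 2*u) (4*t + 2) t := by
    have h := (((hasDerivAt_id t).pow 2).const_mul (2:ℝ)).add ((hasDerivAt_id t).const_mul (2:ℝ))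
    convert h using 1 <;> first
      | rfl
      | (funext x; simp only [id_eq]; push_cast; ring)
      | (simp only [id_eq]; push_cast; ring)
  have h := ((p1.sub p2).add dpoly).sub (p3.const_mul 2)
  convert h using 1 <;> first
    | rfl
    | (funext x; unfold rothH; simp only [Pi.add_apply, Pi.sub_apply]; ring)
    | (unfold rothH1; ring)

private lemma hasDerivAt_rothH1 (ht : -1 < t) : HasDerivAt rothH1 (rothH2 t) t := by
  have hA := rothA_pos t
  have hs : (0:ℝ) < 1 + 2/3*t := by linarith
  have h1t : (0:ℝ) < 1 + t := by linarith
  have dcoef : HasDerivAt (fun u : ℝ => 2*u + 2/3) (2:ℝ) t := by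
    simpa using ((hasDerivAt_id t).const_mul (2:ℝ)).add_const (2/3:ℝ)
  have p1 := dcoef.mul (dlogA' ht)
  have p2 := (dlogS' ht).const_mul (2/3:ℝ)
  have p3 : HasDerivAt (fun u : ℝ => 4*(1+u) * Real.log (1+u)) (4 * (Real.log (1+t) + 1)) t := by
    have h := (dTlogT ht).const_mul (4:ℝ)
    convert h using 1 <;> first
      | rfl
      | (funext x; ring)
      | ring
  have dpoly : HasDerivAt (fun u : ℝ => 4*u) (4:ℝ) t := by
    simpa using (hasDerivAt_id t).const_mul (4:ℝ)
  have h := ((p1.sub p2).add dpoly).sub p3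
  convert h using 1 <;> first
    | rfl
    | (funext x; unfold rothH1; ring)
    | (unfold rothH2; ring)

end derivs

private lemma rothH2_nonneg {t : ℝ} (ht : -1 < t) : 0 ≤ rothH2 t := by
  have hA := rothA_pos t
  have hs : (0:ℝ) < 1 + 2/3*t := by linarith
  have h1t : (0:ℝ) < 1 + t := by linarith
  have hq : (0:ℝ) < (t^2 + 2/3*t + 1) * ((1+t)^2)⁻¹ := by positivity
  have hlog : Real.log ((t^2 + 2/3*t + 1) * ((1+t)^2)⁻¹)
      = Real.log (t^2 + 2/3*t + 1) - 2 * Real.log (1+t) := by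
    rw [Real.log_mul hA.ne' (by positivity), Real.log_inv, Real.log_pow]
    push_cast; ring
  have hlb := one_sub_inv_le_log hq
  rw [hlog, mul_inv, inv_inv] at hlb
  -- hlb : 1 - (t^2+2/3*t+1)⁻¹ * (1+t)^2 ≤ log A - 2 log (1+t)
  have hu : (t^2 + 2/3*t + 1)⁻¹ * (t^2 + 2/3*t + 1) = 1 := inv_mul_cancel₀ hA.ne'
  have hv : (1 + 2/3*t)⁻¹ * (1 + 2/3*t) = 1 := inv_mul_cancel₀ hs.ne'
  have hAs : (0:ℝ) < (t^2 + 2/3*t + 1) * (1 + 2/3*t) := by positivity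
  have hT : (2 * (1 - (t^2 + 2/3*t + 1)⁻¹ * (1+t)^2) + (2*t + 2/3)^2 * (t^2 + 2/3*t + 1)⁻¹
        - 4/9 * (1 + 2/3*t)⁻¹) * ((t^2 + 2/3*t + 1) * (1 + 2/3*t))
      = 8/3*t^3 + 32/9*t^2 := by
    have expand : (2 * (1 - (t^2 + 2/3*t + 1)⁻¹ * (1+t)^2) + (2*t + 2/3)^2 * (t^2 + 2/3*t + 1)⁻¹
          - 4/9 * (1 + 2/3*t)⁻¹) * ((t^2 + 2/3*t + 1) * (1 + 2/3*t))
        = 2*(t^2 + 2/3*t + 1)*(1 + 2/3*t)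
          - 2*(1+t)^2*(1 + 2/3*t)*((t^2 + 2/3*t + 1)⁻¹ * (t^2 + 2/3*t + 1))
          + (2*t + 2/3)^2*(1 + 2/3*t)*((t^2 + 2/3*t + 1)⁻¹ * (t^2 + 2/3*t + 1))
          - 4/9*(t^2 + 2/3*t + 1)*((1 + 2/3*t)⁻¹ * (1 + 2/3*t)) := by ring
    rw [expand, hu, hv]; ring
  have hpoly : (0:ℝ) ≤ 8/3*t^3 + 32/9*t^2 := by
    nlinarith [mul_nonneg (sq_nonneg t) (by linarith : (0:ℝ) ≤ 3*t + 4)]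
  have hTnn : (0:ℝ) ≤ 2 * (1 - (t^2 + 2/3*t + 1)⁻¹ * (1+t)^2) + (2*t + 2/3)^2 * (t^2 + 2/3*t + 1)⁻¹
      - 4/9 * (1 + 2/3*t)⁻¹ := by
    have h0 : (0:ℝ) ≤ (2 * (1 - (t^2 + 2/3*t + 1)⁻¹ * (1+t)^2) + (2*t + 2/3)^2 * (t^2 + 2/3*t + 1)⁻¹
        - 4/9 * (1 + 2/3*t)⁻¹) * ((t^2 + 2/3*t + 1) * (1 + 2/3*t)) := by rw [hT]; exact hpoly
    have := div_nonneg h0 hAs.le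
    rwa [mul_div_cancel_right₀ _ hAs.ne'] at this
  unfold rothH2
  nlinarith [hlb, hTnn]

private lemma rothH_nonneg {t : ℝ} (ht : -1 ≤ t) : 0 ≤ rothH t := by
  have cpoly1 : Continuous fun u : ℝ => u^2 + 2/3*u + 1 := by continuity
  have cpoly2 : Continuous fun u : ℝ => 1 + 2/3*u := by continuity
  have cpoly3 : Continuous fun u : ℝ => 1 + u := by continuity
  have c1 : Continuous fun u : ℝ => (u^2 + 2/3*u + 1) * Real.log (u^2 + 2/3*u + 1) := by
    simpa [Function.comp_def] using Real.continuous_mul_log.comp cpoly1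
  have c2 : Continuous fun u : ℝ => (1 + 2/3*u) * Real.log (1 + 2/3*u) := by
    simpa [Function.comp_def] using Real.continuous_mul_log.comp cpoly2
  have c3 : Continuous fun u : ℝ => (1+u) * Real.log (1+u) := by
    simpa [Function.comp_def] using Real.continuous_mul_log.comp cpoly3
  have hcont : Continuous rothH := by
    unfold rothH
    exact ((((c1.sub c2).add (by continuity)).add (by continuity)).sub
      (continuous_const.mul (cpoly3.mul c3)))
  have hH0 : rothH 0 = 0 := by norm_num [rothH]
  have hH10 : rothH1 0 = 0 := by norm_num [rothH1]
  have hmono1 : MonotoneOn rothH1 (Set.Ioi (-1 : ℝ)) := by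
    apply monotoneOn_of_deriv_nonneg (convex_Ioi _)
    · intro x hx
      exact (hasDerivAt_rothH1 hx).continuousAt.continuousWithinAt
    · intro x hx
      rw [interior_Ioi] at hx
      exact (hasDerivAt_rothH1 hx).differentiableAt.differentiableWithinAt
    · intro x hx
      rw [interior_Ioi] at hx
      rw [(hasDerivAt_rothH1 hx).deriv]
      exact rothH2_nonneg hx
  rcases le_total t 0 with h|h
  · have hanti : AntitoneOn rothH (Set.Icc (-1 : ℝ) 0) := by
      apply antitoneOn_of_deriv_nonpos (convex_Icc _ _) hcont.continuousOn
      · intro x hx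
        rw [interior_Icc] at hx
        exact (hasDerivAt_rothH hx.1).differentiableAt.differentiableWithinAt
      · intro x hx
        rw [interior_Icc] at hx
        rw [(hasDerivAt_rothH hx.1).deriv]
        have := hmono1 (Set.mem_Ioi.2 hx.1) (Set.mem_Ioi.2 (by norm_num : (-1:ℝ) < 0)) hx.2.le
        rwa [hH10] at this
    have := hanti (Set.mem_Icc.2 ⟨ht, h⟩) (Set.mem_Icc.2 ⟨by norm_num, le_refl 0⟩) h
    rwa [hH0] at this
  · have hmono : MonotoneOn rothH (Set.Ici (0 : ℝ)) := by
      apply monotoneOn_of_deriv_nonneg (convex_Ici _) hcont.continuousOn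
      · intro x hx
        rw [interior_Ici] at hx
        have hx' : (-1:ℝ) < x := by linarith [Set.mem_Ioi.1 hx]
        exact (hasDerivAt_rothH hx').differentiableAt.differentiableWithinAt
      · intro x hx
        rw [interior_Ici] at hx
        have hx' : (-1:ℝ) < x := by linarith [Set.mem_Ioi.1 hx]
        rw [(hasDerivAt_rothH hx').deriv]
        have := hmono1 (Set.mem_Ioi.2 (by norm_num : (-1:ℝ) < 0)) (Set.mem_Ioi.2 hx') (Set.mem_Ioi.1 hx).le
        rwa [hH10] at this
    have := hmono (Set.mem_Ici.2 (le_refl 0)) (Set.mem_Ici.2 h) h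
    rwa [hH0] at this

private lemma norm_key {t b : ℝ} (ht : -1 ≤ t) (hb : 0 < b) :
    (1+t)^2 * Real.log ((1+t)^2) - t^2 * Real.log (t^2)
      ≤ (1+t)^2 * Real.log (1+b) - t^2 * Real.log b + 2*t^2 + 2*t
        - 4/3 * Real.log (1+b) * t := by
  have h1b : (0:ℝ) < 1 + b := by linarith
  have hA := rothA_pos t
  have hs : (0:ℝ) < 1 + 2/3*t := by linarith
  rcases eq_or_ne t 0 with rfl | ht0
  · simp only [add_zero, mul_zero, zero_mul, sub_zero, zero_add]
    norm_num
    exact Real.log_nonneg (by linarith)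
  · -- Gibbs step : A log(1+b) - t² log b + t² log t² ≥ A log A - s log s
    have ht2 : (0:ℝ) < t^2 := by positivity
    have hP : (0:ℝ) < (1+b) * t^2 / ((t^2 + 2/3*t + 1) * b) := by positivity
    have hQ : (0:ℝ) < (1+b) * (1 + 2/3*t) / (t^2 + 2/3*t + 1) := by positivity
    have eP : Real.log ((1+b) * t^2 / ((t^2 + 2/3*t + 1) * b))
        = Real.log (1+b) + Real.log (t^2) - Real.log (t^2 + 2/3*t + 1) - Real.log b := by
      rw [Real.log_div (by positivity) (by positivity), Real.log_mul h1b.ne' ht2.ne',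
        Real.log_mul hA.ne' hb.ne']
      ring
    have eQ : Real.log ((1+b) * (1 + 2/3*t) / (t^2 + 2/3*t + 1))
        = Real.log (1+b) + Real.log (1 + 2/3*t) - Real.log (t^2 + 2/3*t + 1) := by
      rw [Real.log_div (by positivity) hA.ne', Real.log_mul h1b.ne' hs.ne']
    have lP := one_sub_inv_le_log hP
    have lQ := one_sub_inv_le_log hQ
    have i1 : t^2 * (1 - ((1+b) * t^2 / ((t^2 + 2/3*t + 1) * b))⁻¹)
        ≤ t^2 * (Real.log (1+b) + Real.log (t^2) - Real.log (t^2 + 2/3*t + 1) - Real.log b) := by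
      rw [← eP]; exact mul_le_mul_of_nonneg_left lP (sq_nonneg t)
    have i2 : (1 + 2/3*t) * (1 - ((1+b) * (1 + 2/3*t) / (t^2 + 2/3*t + 1))⁻¹)
        ≤ (1 + 2/3*t) * (Real.log (1+b) + Real.log (1 + 2/3*t) - Real.log (t^2 + 2/3*t + 1)) := by
      rw [← eQ]; exact mul_le_mul_of_nonneg_left lQ hs.le
    have comb : t^2 * (1 - ((1+b) * t^2 / ((t^2 + 2/3*t + 1) * b))⁻¹)
        + (1 + 2/3*t) * (1 - ((1+b) * (1 + 2/3*t) / (t^2 + 2/3*t + 1))⁻¹) = 0 := by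
      rw [inv_div, inv_div]
      have c1 : t^2 * ((t^2 + 2/3*t + 1) * b / ((1+b) * t^2))
          = (t^2 + 2/3*t + 1) * b * (1+b)⁻¹ := by
        rw [div_eq_mul_inv ((t^2 + 2/3*t + 1) * b) ((1+b) * t^2), mul_inv (1+b) (t^2)]
        trans (t^2 * (t^2)⁻¹) * ((t^2 + 2/3*t + 1) * b * (1+b)⁻¹)
        · ring
        · rw [mul_inv_cancel₀ ht2.ne', one_mul]
      have c2 : (1 + 2/3*t) * ((t^2 + 2/3*t + 1) / ((1+b) * (1 + 2/3*t)))
          = (t^2 + 2/3*t + 1) * (1+b)⁻¹ := by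
        rw [div_eq_mul_inv (t^2 + 2/3*t + 1) ((1+b) * (1 + 2/3*t)), mul_inv (1+b) (1 + 2/3*t)]
        trans ((1 + 2/3*t) * (1 + 2/3*t)⁻¹) * ((t^2 + 2/3*t + 1) * (1+b)⁻¹)
        · ring
        · rw [mul_inv_cancel₀ hs.ne', one_mul]
      have c3 : (t^2 + 2/3*t + 1) * b * (1+b)⁻¹ + (t^2 + 2/3*t + 1) * (1+b)⁻¹
          = t^2 + 2/3*t + 1 := by
        trans ((1+b) * (1+b)⁻¹) * (t^2 + 2/3*t + 1)
        · ring
        · rw [mul_inv_cancel₀ h1b.ne', one_mul]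
      have e : t^2 * (1 - (t^2 + 2/3*t + 1) * b / ((1+b) * t^2))
          + (1 + 2/3*t) * (1 - (t^2 + 2/3*t + 1) / ((1+b) * (1 + 2/3*t)))
          = t^2 + (1 + 2/3*t) - t^2 * ((t^2 + 2/3*t + 1) * b / ((1+b) * t^2))
            - (1 + 2/3*t) * ((t^2 + 2/3*t + 1) / ((1+b) * (1 + 2/3*t))) := by ring
      rw [e, c1, c2]
      linear_combination -c3
    have gibbs : 0 ≤ (t^2 + 2/3*t + 1) * Real.log (1+b) - t^2 * Real.log b + t^2 * Real.log (t^2)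
        - ((t^2 + 2/3*t + 1) * Real.log (t^2 + 2/3*t + 1)
            - (1 + 2/3*t) * Real.log (1 + 2/3*t)) := by
      nlinarith [i1, i2, comb]
    have hH := rothH_nonneg ht
    unfold rothH at hH
    have hsq : (1+t)^2 * Real.log ((1+t)^2) = 2*((1+t) * ((1+t) * Real.log (1+t))) := by
      rw [Real.log_pow]
      push_cast
      ring
    nlinarith [gibbs, hH, hsq]

private lemma key {a b g : ℝ} (ha : 0 < a) (hb : 0 < b) (hg : -a ≤ g) :
    (a+g)^2 * Real.log ((a+g)^2) - g^2 * Real.log (g^2)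
      ≤ (a+g)^2 * Real.log (a^2+b) - g^2 * Real.log b + 2*g^2 + 2*(a*g)
        - 4/3 * Real.log ((a^2+b)/a^2) * (a*g) := by
  have ha2 : (0:ℝ) < a^2 := by positivity
  have hab : (0:ℝ) < a^2 + b := by positivity
  have l4 : Real.log ((a^2+b)/a^2) = Real.log (a^2+b) - Real.log (a^2) := by
    rw [Real.log_div hab.ne' ha2.ne']
  rcases eq_or_ne g 0 with rfl | hg0
  · simp only [add_zero, mul_zero, zero_mul, sub_zero, zero_pow, ne_eq, OfNat.ofNat_ne_zero,
      not_false_eq_true]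
    have := Real.log_le_log ha2 (by linarith : a^2 ≤ a^2 + b)
    nlinarith [this, sq_nonneg a]
  rcases eq_or_lt_of_le hg with hgeq | hglt
  · -- g = -a
    have hga : g = -a := by linarith
    subst hga
    have z1 : (a + -a : ℝ) = 0 := by ring
    have z2 : ((-a : ℝ))^2 = a^2 := by ring
    rw [z1, z2, l4]
    have h1 : Real.log b ≤ Real.log (a^2+b) := Real.log_le_log hb (by linarith)
    have h2 : Real.log (a^2) ≤ Real.log (a^2+b) := Real.log_le_log ha2 (by linarith)
    have k1 : (0:ℝ) ≤ a^2 * (Real.log (a^2+b) - Real.log b) :=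
      mul_nonneg ha2.le (by linarith)
    have k2 : (0:ℝ) ≤ a^2 * (Real.log (a^2+b) - Real.log (a^2)) :=
      mul_nonneg ha2.le (by linarith)
    have z3 : ((0:ℝ))^2 * Real.log ((0:ℝ)^2) = 0 := by norm_num
    rw [z3]
    nlinarith [k1, k2]
  · -- -a < g, g ≠ 0
    have hag : (0:ℝ) < a + g := by linarith
    have ht : (-1:ℝ) ≤ g/a := by
      rw [le_div_iff₀ ha]
      linarith
    have hb' : (0:ℝ) < b/a^2 := by positivity
    have h := norm_key ht hb'
    have e1 : 1 + g/a = (a+g)/a := by field_simp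
    have e2 : (1 + g/a)^2 = (a+g)^2/a^2 := by rw [e1, div_pow]
    have e3 : (g/a)^2 = g^2/a^2 := by rw [div_pow]
    have e4 : 1 + b/a^2 = (a^2+b)/a^2 := by field_simp
    have hg2 : (0:ℝ) < g^2 := by positivity
    have hag2 : (0:ℝ) < (a+g)^2 := by positivity
    have l1 : Real.log ((1 + g/a)^2) = Real.log ((a+g)^2) - Real.log (a^2) := by
      rw [e2, Real.log_div hag2.ne' ha2.ne']
    have l2 : Real.log ((g/a)^2) = Real.log (g^2) - Real.log (a^2) := by
      rw [e3, Real.log_div hg2.ne' ha2.ne']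
    have l3 : Real.log (1 + b/a^2) = Real.log (a^2+b) - Real.log (a^2) := by
      rw [e4, Real.log_div hab.ne' ha2.ne']
    have l5 : Real.log (b/a^2) = Real.log b - Real.log (a^2) := by
      rw [Real.log_div hb.ne' ha2.ne']
    rw [l1, l2, l3, l5, e2, e3] at h
    have h3 := mul_le_mul_of_nonneg_left h ha2.le
    have eL : a^2 * ((a+g)^2/a^2 * (Real.log ((a+g)^2) - Real.log (a^2))
          - g^2/a^2 * (Real.log (g^2) - Real.log (a^2)))
        = (a+g)^2 * Real.log ((a+g)^2) - g^2 * Real.log (g^2)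
          - ((a+g)^2 - g^2) * Real.log (a^2) := by
      field_simp
      ring
    have eR : a^2 * ((a+g)^2/a^2 * (Real.log (a^2+b) - Real.log (a^2))
          - g^2/a^2 * (Real.log b - Real.log (a^2)) + 2*(g^2/a^2) + 2*(g/a)
          - 4/3 * (Real.log (a^2+b) - Real.log (a^2)) * (g/a))
        = (a+g)^2 * Real.log (a^2+b) - g^2 * Real.log b + 2*g^2 + 2*(a*g)
          - 4/3 * (Real.log (a^2+b) - Real.log (a^2)) * (a*g)
          - ((a+g)^2 - g^2) * Real.log (a^2) := by
      field_simp
      ring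
    rw [eL, eR] at h3
    rw [l4]
    linarith [h3]

private lemma abs_mul_log_le {x : ℝ} (hx : 0 ≤ x) : |x * Real.log x| ≤ x^2 + 1 := by
  rcases eq_or_lt_of_le hx with h0 | hx0
  · rw [← h0]; norm_num
  rcases le_or_gt x 1 with h1 | h1
  · have hlog : Real.log x ≤ 0 := Real.log_nonpos hx h1
    have hlb : 1 - x⁻¹ ≤ Real.log x := one_sub_inv_le_log hx0
    have hxx : x * x⁻¹ = 1 := mul_inv_cancel₀ hx0.ne'
    rw [abs_of_nonpos (mul_nonpos_of_nonneg_of_nonpos hx hlog)]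
    nlinarith [mul_le_mul_of_nonneg_left hlb hx, sq_nonneg x]
  · have hlog : 0 ≤ Real.log x := Real.log_nonneg h1.le
    have hub : Real.log x ≤ x - 1 := Real.log_le_sub_one_of_pos hx0
    rw [abs_of_nonneg (mul_nonneg hx hlog)]
    nlinarith [mul_le_mul_of_nonneg_left hub hx]

/-- Rothaus' inequality: for a probability measure `μ` and nonnegative measurable `φ`
with `μ[φ²] < ∞`, setting `φ̃ = (√φ - μ[√φ])²`,
`H(φ|μ) ≤ H(φ̃|μ) + 2 μ[(√φ - μ[√φ])²]`. -/
theorem stmt1 {X : Type*} [MeasurableSpace X]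
    (μ : Measure X) [IsProbabilityMeasure μ]
    (φ : X → ℝ) (hφm : Measurable φ) (hφ0 : ∀ x, 0 ≤ φ x)
    (hφ2 : Integrable (fun x => (φ x) ^ 2) μ) :
    (∫ x, φ x * log (φ x) ∂μ) - (∫ x, φ x ∂μ) * log (∫ x, φ x ∂μ)
      ≤ ((∫ x, (Real.sqrt (φ x) - ∫ y, Real.sqrt (φ y) ∂μ) ^ 2
              * log ((Real.sqrt (φ x) - ∫ y, Real.sqrt (φ y) ∂μ) ^ 2) ∂μ)
          - (∫ x, (Real.sqrt (φ x) - ∫ y, Real.sqrt (φ y) ∂μ) ^ 2 ∂μ)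
              * log (∫ x, (Real.sqrt (φ x) - ∫ y, Real.sqrt (φ y) ∂μ) ^ 2 ∂μ))
        + 2 * ∫ x, (Real.sqrt (φ x) - ∫ y, Real.sqrt (φ y) ∂μ) ^ 2 ∂μ := by
  have hsq : ∀ x, Real.sqrt (φ x) ^ 2 = φ x := fun x => Real.sq_sqrt (hφ0 x)
  set a : ℝ := ∫ y, Real.sqrt (φ y) ∂μ with ha_def
  have ha0 : 0 ≤ a := by
    rw [ha_def]; exact integral_nonneg fun x => Real.sqrt_nonneg _
  rcases eq_or_lt_of_le ha0 with haz | hap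
  · -- a = 0 : both sides coincide up to the nonnegative extra term
    rw [← haz]
    simp only [sub_zero, hsq]
    have h2 : 0 ≤ ∫ x, φ x ∂μ := integral_nonneg hφ0
    linarith
  -- measurability facts
  have hfm : Measurable fun x => Real.sqrt (φ x) := Real.continuous_sqrt.measurable.comp hφm
  have hgm : Measurable fun x => Real.sqrt (φ x) - a := hfm.sub measurable_const
  have hg2m : Measurable fun x => (Real.sqrt (φ x) - a)^2 := hgm.pow_const 2
  -- integrability facts
  have hφ1 : Integrable φ μ := by
    refine (hφ2.add (integrable_const 1)).mono' hφm.aestronglyMeasurable ?_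
    filter_upwards with x
    simp only [Pi.add_apply]
    rw [Real.norm_eq_abs, abs_of_nonneg (hφ0 x)]
    nlinarith [hφ0 x, sq_nonneg (φ x - 1)]
  have hf_int : Integrable (fun x => Real.sqrt (φ x)) μ := by
    refine (hφ1.add (integrable_const 1)).mono' hfm.aestronglyMeasurable ?_
    filter_upwards with x
    simp only [Pi.add_apply]
    rw [Real.norm_eq_abs, abs_of_nonneg (Real.sqrt_nonneg _)]
    nlinarith [hsq x, Real.sqrt_nonneg (φ x), sq_nonneg (Real.sqrt (φ x) - 1)]
  have hg_int : Integrable (fun x => Real.sqrt (φ x) - a) μ := hf_int.sub (integrable_const a)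
  have hgsq : ∀ x, (Real.sqrt (φ x) - a)^2 = φ x - (2*a) * Real.sqrt (φ x) + a^2 := by
    intro x; linear_combination hsq x
  have hg2_int : Integrable (fun x => (Real.sqrt (φ x) - a)^2) μ := by
    have e : (fun x => (Real.sqrt (φ x) - a)^2)
        = fun x => φ x - (2*a) * Real.sqrt (φ x) + a^2 := funext hgsq
    rw [e]
    exact (hφ1.sub (hf_int.const_mul (2*a))).add (integrable_const _)
  have hg4_int : Integrable (fun x => ((Real.sqrt (φ x) - a)^2)^2) μ := by
    refine ((hφ2.const_mul 8).add (integrable_const (8*a^4))).mono'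
      (hg2m.pow_const 2).aestronglyMeasurable ?_
    filter_upwards with x
    simp only [Pi.add_apply]
    rw [Real.norm_eq_abs, abs_of_nonneg (by positivity)]
    have hu := hsq x
    nlinarith [sq_nonneg (Real.sqrt (φ x) + a), sq_nonneg (Real.sqrt (φ x) - a),
      sq_nonneg (Real.sqrt (φ x)^2 - a^2), sq_nonneg (Real.sqrt (φ x)^2 + a^2),
      sq_nonneg ((Real.sqrt (φ x) - a)^2), Real.sqrt_nonneg (φ x)]
  have hΛφ_int : Integrable (fun x => φ x * Real.log (φ x)) μ := by
    refine (hφ2.add (integrable_const 1)).mono'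
      (hφm.mul (Real.measurable_log.comp hφm)).aestronglyMeasurable ?_
    filter_upwards with x
    simp only [Pi.add_apply]
    rw [Real.norm_eq_abs]
    exact abs_mul_log_le (hφ0 x)
  have hΛg2_int : Integrable
      (fun x => (Real.sqrt (φ x) - a)^2 * Real.log ((Real.sqrt (φ x) - a)^2)) μ := by
    refine (hg4_int.add (integrable_const 1)).mono'
      (hg2m.mul (Real.measurable_log.comp hg2m)).aestronglyMeasurable ?_
    filter_upwards with x
    simp only [Pi.add_apply]
    rw [Real.norm_eq_abs]
    exact abs_mul_log_le (sq_nonneg _)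
  -- basic integral identities
  have hIg : ∫ x, (Real.sqrt (φ x) - a) ∂μ = 0 := by
    rw [integral_sub hf_int (integrable_const a), integral_const, probReal_univ]
    simp [← ha_def]
  have hIf2 : ∫ x, φ x ∂μ = a^2 + (∫ x, (Real.sqrt (φ x) - a)^2 ∂μ) := by
    have e : (fun x => (Real.sqrt (φ x) - a)^2)
        = fun x => φ x - (2*a) * Real.sqrt (φ x) + a^2 := funext hgsq
    have iA : Integrable (fun x => φ x - (2*a) * Real.sqrt (φ x)) μ :=
      hφ1.sub (hf_int.const_mul (2*a))
    rw [e, integral_add iA (integrable_const (a^2)),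
      integral_sub hφ1 (hf_int.const_mul (2*a)), integral_const_mul, integral_const,
      probReal_univ, ← ha_def]
    simp
    ring
  set b : ℝ := ∫ x, (Real.sqrt (φ x) - a)^2 ∂μ with hb_def
  have hb0 : 0 ≤ b := by
    rw [hb_def]; exact integral_nonneg fun x => sq_nonneg _
  rcases eq_or_lt_of_le hb0 with hbz | hbp
  · -- b = 0 : φ = a² a.e., both sides are 0
    have hae : (fun x => (Real.sqrt (φ x) - a)^2) =ᵐ[μ] 0 :=
      (integral_eq_zero_iff_of_nonneg (fun x => sq_nonneg _) hg2_int).mp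
        (by rw [← hb_def]; exact hbz.symm)
    have hφae : φ =ᵐ[μ] fun _ => a^2 := by
      filter_upwards [hae] with x hx
      have h1 : Real.sqrt (φ x) - a = 0 := by
        have := pow_eq_zero_iff (n := 2) (by norm_num) |>.mp hx
        exact this
      have h2 : Real.sqrt (φ x) = a := by linarith
      rw [← hsq x, h2]
    have hI1 : ∫ x, φ x * Real.log (φ x) ∂μ = a^2 * Real.log (a^2) := by
      rw [integral_congr_ae (g := fun _ => a^2 * Real.log (a^2))
        (by filter_upwards [hφae] with x hx; rw [hx]), integral_const, probReal_univ]
      simp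
    have hI3 : ∫ x, (Real.sqrt (φ x) - a)^2 * Real.log ((Real.sqrt (φ x) - a)^2) ∂μ = 0 := by
      rw [integral_congr_ae (g := fun _ => (0:ℝ))
        (by filter_upwards [hae] with x hx; rw [hx]; simp), integral_zero]
    rw [hI1, hI3, hIf2, ← hbz]
    norm_num
  · -- main case : 0 < a, 0 < b
    have hpt : ∀ x, φ x * Real.log (φ x)
          - (Real.sqrt (φ x) - a)^2 * Real.log ((Real.sqrt (φ x) - a)^2)
        ≤ φ x * Real.log (a^2+b) - (Real.sqrt (φ x) - a)^2 * Real.log b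
          + 2*(Real.sqrt (φ x) - a)^2 + 2*(a*(Real.sqrt (φ x) - a))
          - 4/3 * Real.log ((a^2+b)/a^2) * (a*(Real.sqrt (φ x) - a)) := by
      intro x
      have hk := key hap hbp (show -a ≤ Real.sqrt (φ x) - a by
        have := Real.sqrt_nonneg (φ x); linarith)
      rw [show a + (Real.sqrt (φ x) - a) = Real.sqrt (φ x) from by ring, hsq x] at hk
      linarith
    have i1 : Integrable (fun x => φ x * Real.log (a^2+b)) μ := hφ1.mul_const _
    have i2 : Integrable (fun x => (Real.sqrt (φ x) - a)^2 * Real.log b) μ :=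
      hg2_int.mul_const _
    have i3 : Integrable (fun x => 2*(Real.sqrt (φ x) - a)^2) μ := hg2_int.const_mul 2
    have ig : Integrable (fun x => a*(Real.sqrt (φ x) - a)) μ := hg_int.const_mul a
    have i4 : Integrable (fun x => 2*(a*(Real.sqrt (φ x) - a))) μ := ig.const_mul 2
    have i5 : Integrable (fun x => 4/3 * Real.log ((a^2+b)/a^2) * (a*(Real.sqrt (φ x) - a))) μ :=
      ig.const_mul _
    have i12 : Integrable (fun x => φ x * Real.log (a^2+b)
        - (Real.sqrt (φ x) - a)^2 * Real.log b) μ := i1.sub i2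
    have i123 : Integrable (fun x => φ x * Real.log (a^2+b)
        - (Real.sqrt (φ x) - a)^2 * Real.log b + 2*(Real.sqrt (φ x) - a)^2) μ := i12.add i3
    have i1234 : Integrable (fun x => φ x * Real.log (a^2+b)
        - (Real.sqrt (φ x) - a)^2 * Real.log b + 2*(Real.sqrt (φ x) - a)^2
        + 2*(a*(Real.sqrt (φ x) - a))) μ := i123.add i4
    have hRint : Integrable (fun x => φ x * Real.log (a^2+b)
        - (Real.sqrt (φ x) - a)^2 * Real.log b
        + 2*(Real.sqrt (φ x) - a)^2 + 2*(a*(Real.sqrt (φ x) - a))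
        - 4/3 * Real.log ((a^2+b)/a^2) * (a*(Real.sqrt (φ x) - a))) μ := i1234.sub i5
    have iLHS : Integrable (fun x => φ x * Real.log (φ x)
        - (Real.sqrt (φ x) - a)^2 * Real.log ((Real.sqrt (φ x) - a)^2)) μ :=
      hΛφ_int.sub hΛg2_int
    have hint := integral_mono iLHS hRint (fun x => hpt x)
    rw [integral_sub hΛφ_int hΛg2_int] at hint
    rw [integral_sub i1234 i5, integral_add i123 i4, integral_add i12 i3,
      integral_sub i1 i2, integral_mul_const, integral_mul_const,
      integral_const_mul, integral_const_mul, integral_const_mul,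
      integral_const_mul, integral_const_mul, hIg, ← hb_def] at hint
    rw [hIf2]
    rw [hIf2] at hint
    simp only [mul_zero, add_zero, sub_zero] at hint
    linarith [hint]
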